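/- Let R be a ring with identity and let f = Σ_{i≥0} a_i x^i, g = Σ_{i≥0} b_i x^i, h = Σ_{i≥0} c_i x^i be formal power series in R⟦x⟧. Then f is (g,h)-invertible in R⟦x⟧ if and only if a₀ is (b₀,c₀)-invertible in R and there exist reflexive inverses b₀⁺ of b₀ and c₀⁺ of c₀ such that, in R⟦x⟧ (with elements of R regarded as constant power series), (1 − b₀·b₀⁺)·(Σ_{i≥1} b_i x^i)·(1 + b₀⁺·(Σ_{i≥1} b_i x^i))⁻¹·(1 − b₀⁺·b₀) = 0 and (1 − c₀·c₀⁺)·(Σ_{i≥1} c_i x^i)·(1 + c₀⁺·(Σ_{i≥1} c_i x^i))⁻¹·(1 − c₀⁺·c₀) = 0 (both 1 + b₀⁺·(Σ_{i≥1} b_i x^i) and 1 + c₀⁺·(Σ_{i≥1} c_i x^i) are units of R⟦x⟧ since their constant term is 1). -/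

import Mathlib

/-- `y` is the (b,c)-inverse of `a`: `c*a*y = c`, `y*a*b = b`, `y ∈ bS ∩ Sc`. -/
def IsBCInverse {S : Type*} [Ring S] (a b c y : S) : Prop :=
  c * a * y = c ∧ y * a * b = b ∧ (∃ s, y = b * s) ∧ (∃ t, y = t * c)

section Aux
open PowerSeries
variable {R : Type*} [Ring R]

lemma isUnit_cc_one {u : PowerSeries R} (h : constantCoeff u = 1) : IsUnit u := by
  rw [PowerSeries.isUnit_iff_constantCoeff, h]; exact isUnit_one
lemma mul_inv_cc_one {u : PowerSeries R} (h : constantCoeff u = 1) :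
    u * Ring.inverse u = 1 := Ring.mul_inverse_cancel u (isUnit_cc_one h)
lemma inv_mul_cc_one {u : PowerSeries R} (h : constantCoeff u = 1) :
    Ring.inverse u * u = 1 := Ring.inverse_mul_cancel u (isUnit_cc_one h)
lemma cc_inv_one {u : PowerSeries R} (h : constantCoeff u = 1) :
    constantCoeff (Ring.inverse u) = 1 := by
  have := congrArg (constantCoeff) (inv_mul_cc_one h)
  simpa [h] using this

lemma factor (g : PowerSeries R) (bp : R)
    (hΔ : (1 - C (constantCoeff g) * C bp) * (g - C (constantCoeff g))
        * Ring.inverse (1 + C bp * (g - C (constantCoeff g)))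
        * (1 - C bp * C (constantCoeff g)) = 0) :
    ∃ m u : PowerSeries R, constantCoeff m = 1 ∧ constantCoeff u = 1 ∧
      g = m * C (constantCoeff g) * u := by
  set b₀ := constantCoeff g with hb₀
  set u : PowerSeries R := 1 + C bp * (g - C b₀) with hu_def
  have hcu : constantCoeff u = 1 := by simp [hu_def, constantCoeff_C, hb₀]
  set U : PowerSeries R := Ring.inverse u with hU_def
  have hUu : U * u = 1 := inv_mul_cc_one hcu
  have hccU : constantCoeff U = 1 := cc_inv_one hcu
  set r : PowerSeries R := (1 - C b₀ * C bp) * (g - C b₀) * U with hr_def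
  have hccr : constantCoeff r = 0 := by
    simp [hr_def, map_mul, hccU, constantCoeff_C, hb₀]
  set m : PowerSeries R := 1 + r * C bp with hm_def
  have hccm : constantCoeff m = 1 := by simp [hm_def, map_mul, hccr]
  -- hΔ : r * (1 - C bp * C b₀) = 0
  have hr : r = r * (C bp * C b₀) := by
    have h' : r * (1 - C bp * C b₀) = 0 := hΔ
    rw [mul_sub, mul_one] at h'
    exact sub_eq_zero.mp h'
  have hru : r * u = (1 - C b₀ * C bp) * (g - C b₀) := by
    rw [hr_def, mul_assoc, hUu, mul_one]
  have hg : (C b₀ + r) * u = g := by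
    rw [add_mul, hru, hu_def]
    noncomm_ring
  have hm : m * C b₀ = C b₀ + r := by
    rw [hm_def, add_mul, one_mul, mul_assoc, ← hr]
  exact ⟨m, u, hccm, hcu, by rw [hm, hg]⟩
lemma coeff_mul_of_lt {φ ψ : PowerSeries R} {n : ℕ} (h : ∀ j < n, coeff j ψ = 0) :
    coeff n (φ * ψ) = constantCoeff φ * coeff n ψ := by
  rw [coeff_mul, Finset.sum_eq_single (0, n)]
  · rw [coeff_zero_eq_constantCoeff]
  · rintro ⟨i, j⟩ hij hne
    rw [Finset.HasAntidiagonal.mem_antidiagonal] at hij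
    have hj : j < n := by
      rcases Nat.lt_or_ge j n with hl | hl
      · exact hl
      · exfalso; apply hne
        have hjn : j = n := le_antisymm (hij ▸ Nat.le_add_left j i) hl
        have : i = 0 := by omega
        simp [this, hjn]
    rw [h j hj, mul_zero]
  · intro hn; exact absurd (Finset.HasAntidiagonal.mem_antidiagonal.mpr (by simp)) hn
lemma series_eq_zero_of (X p : PowerSeries R) (a : R)
    (h1 : ∀ n, a * coeff n X = 0)
    (h2 : X = p * X) (hp : constantCoeff p = a) : X = 0 := by
  ext n
  induction n using Nat.strong_induction_on with
  | _ n ih =>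
    have hx : ∀ j < n, coeff j X = 0 := by
      intro j hj; have := ih j hj; simpa using this
    have := congrArg (coeff n) h2
    rw [coeff_mul_of_lt hx, hp, h1 n] at this
    simpa using this


/-- Key lemma: if `g*w*g = g` then the displayed expression vanishes with `bp = ε w`. -/
lemma regKey (g w : PowerSeries R) (hw : g * w * g = g) :
    (1 - C (constantCoeff g) * C (constantCoeff w))
      * (g - C (constantCoeff g))
      * Ring.inverse (1 + C (constantCoeff w) * (g - C (constantCoeff g)))
      * (1 - C (constantCoeff w) * C (constantCoeff g)) = 0 := by
  set b₀ := constantCoeff g with hb₀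
  set w₀ := constantCoeff w with hw₀
  set u : PowerSeries R := 1 + C w₀ * (g - C b₀) with hu_def
  have hcu : constantCoeff u = 1 := by
    simp [hu_def, constantCoeff_C, hb₀]
  set U : PowerSeries R := Ring.inverse u with hU_def
  have huU : u * U = 1 := mul_inv_cc_one hcu
  have hUu : U * u = 1 := inv_mul_cc_one hcu
  -- constant-level identity
  have hb : b₀ * w₀ * b₀ = b₀ := by
    have := congrArg (constantCoeff) hw
    simpa [map_mul] using this
  -- C b₀ * u = C b₀ * C w₀ * g
  have hbu : C b₀ * u = C b₀ * C w₀ * g := by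
    have h1 : C b₀ * C w₀ * C b₀ = C b₀ := by
      rw [← map_mul, ← map_mul, hb]
    have key : C b₀ * u - C b₀ * C w₀ * g
        = C b₀ - C b₀ * C w₀ * C b₀ := by
      rw [hu_def]; noncomm_ring
    rw [h1, sub_self] at key
    exact sub_eq_zero.mp key
  have hbU : C b₀ * C w₀ * g * U = C b₀ := by
    have := congrArg (· * U) hbu
    rw [← this, mul_assoc, huU, mul_one]
  set X : PowerSeries R := g - g * U * (C w₀ * g) with hX_def
  -- (C b₀ * C w₀) * X = 0
  have h0 : C b₀ * C w₀ * X = 0 := by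
    rw [hX_def, mul_sub]
    have : C b₀ * C w₀ * (g * U * (C w₀ * g))
        = C b₀ * C w₀ * g * U * (C w₀ * g) := by noncomm_ring
    rw [this, hbU, sub_eq_zero]
    noncomm_ring
  -- X = (g*w) * X
  have hgwX : X = g * w * X := by
    have : g * w * X = g * w * g - g * w * g * U * (C w₀ * g) := by
      rw [hX_def]; noncomm_ring
    rw [this, hw, hX_def]
  have h1 : ∀ n, (b₀ * w₀) * coeff n X = 0 := by
    intro n
    have e : C (b₀ * w₀) * X = 0 := by rw [map_mul]; exact h0
    have := congrArg (coeff n) e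
    rw [coeff_C_mul] at this
    simpa using this
  have hX0 : X = 0 :=
    series_eq_zero_of X (g * w) (b₀ * w₀) h1 hgwX (by simp [map_mul, hb₀, hw₀])
  -- now conclude
  have hAg : (1 - C b₀ * C w₀) * (g - C b₀) = (1 - C b₀ * C w₀) * g := by
    have h1' : C b₀ * C w₀ * C b₀ = C b₀ := by
      rw [← map_mul, ← map_mul, hb]
    have key : (1 - C b₀ * C w₀) * (g - C b₀) - (1 - C b₀ * C w₀) * g
        = C b₀ * C w₀ * C b₀ - C b₀ := by noncomm_ring
    rw [h1', sub_self] at key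
    exact sub_eq_zero.mp key
  have hUB : U * (1 - C w₀ * C b₀) = 1 - U * (C w₀ * g) := by
    have hrw : (1 : PowerSeries R) - C w₀ * C b₀ = u - C w₀ * g := by
      rw [hu_def]; noncomm_ring
    rw [hrw, mul_sub, hUu]
  calc (1 - C b₀ * C w₀) * (g - C b₀) * U * (1 - C w₀ * C b₀)
      = (1 - C b₀ * C w₀) * g * (U * (1 - C w₀ * C b₀)) := by
        rw [hAg]; noncomm_ring
    _ = (1 - C b₀ * C w₀) * g * (1 - U * (C w₀ * g)) := by rw [hUB]
    _ = (1 - C b₀ * C w₀) * X := by rw [hX_def]; noncomm_ring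
    _ = X - C b₀ * C w₀ * X := by noncomm_ring
    _ = 0 := by rw [h0, hX0, sub_zero]

end Aux

open PowerSeries in
/-- a power series `f` is `(g,h)`-invertible in `R⟦x⟧` iff its constant
term `a₀` is `(b₀,c₀)`-invertible in `R` and there are reflexive inverses `b₀⁺, c₀⁺` of
the constant terms `b₀, c₀` such that the two displayed equations hold in `R⟦x⟧`
(here `Σ_{i≥1} b_i x^i = g - C b₀` and `Σ_{i≥1} c_i x^i = h - C c₀`). -/
theorem stmt10 {R : Type*} [Ring R] (f g h : PowerSeries R) :
    (∃ y, IsBCInverse f g h y) ↔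
      ((∃ y₀, IsBCInverse (PowerSeries.constantCoeff f)
          (PowerSeries.constantCoeff g) (PowerSeries.constantCoeff h) y₀) ∧
       ∃ bp cp : R,
         (PowerSeries.constantCoeff g * bp * PowerSeries.constantCoeff g
            = PowerSeries.constantCoeff g ∧
          bp * PowerSeries.constantCoeff g * bp = bp) ∧
         (PowerSeries.constantCoeff h * cp * PowerSeries.constantCoeff h
            = PowerSeries.constantCoeff h ∧
          cp * PowerSeries.constantCoeff h * cp = cp) ∧
         (1 - PowerSeries.C (PowerSeries.constantCoeff g) * PowerSeries.C bp)
           * (g - PowerSeries.C (PowerSeries.constantCoeff g))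
           * Ring.inverse (1 + PowerSeries.C bp
               * (g - PowerSeries.C (PowerSeries.constantCoeff g)))
           * (1 - PowerSeries.C bp
               * PowerSeries.C (PowerSeries.constantCoeff g)) = 0 ∧
         (1 - PowerSeries.C (PowerSeries.constantCoeff h) * PowerSeries.C cp)
           * (h - PowerSeries.C (PowerSeries.constantCoeff h))
           * Ring.inverse (1 + PowerSeries.C cp
               * (h - PowerSeries.C (PowerSeries.constantCoeff h)))
           * (1 - PowerSeries.C cp
               * PowerSeries.C (PowerSeries.constantCoeff h)) = 0) := by
  constructor
  · rintro ⟨y, hC', hB', ⟨s, hs⟩, ⟨t, ht⟩⟩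
    constructor
    · exact ⟨constantCoeff y,
        by simpa [map_mul] using congrArg (constantCoeff) hC',
        by simpa [map_mul] using congrArg (constantCoeff) hB',
        ⟨constantCoeff s, by simpa [map_mul] using congrArg (constantCoeff) hs⟩,
        ⟨constantCoeff t, by simpa [map_mul] using congrArg (constantCoeff) ht⟩⟩
    · set k := s * f with hk
      have hgkg : g * k * g = g := by
        have e : g * k * g = g * s * (f * g) := by rw [hk]; noncomm_ring
        rw [← hs] at e
        rw [e, ← mul_assoc]; exact hB'
      set w := k * g * k with hw
      have hgwg : g * w * g = g := by
        have e : g * w * g = g * k * g * (k * g) := by rw [hw]; noncomm_ring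
        rw [hgkg] at e
        rw [e, ← mul_assoc]; exact hgkg
      have hwgw : w * g * w = w := by
        have e : w * g * w = k * (g * k * g) * (k * g * k) := by rw [hw]; noncomm_ring
        rw [hgkg] at e
        have e2 : k * g * (k * g * k) = k * (g * k * g) * k := by noncomm_ring
        rw [e, e2, hgkg, ← hw]
      set k' := f * t with hk'
      have hhkh : h * k' * h = h := by
        have e : h * k' * h = h * f * (t * h) := by rw [hk']; noncomm_ring
        rw [← ht] at e
        rw [e]; exact hC'
      set w' := k' * h * k' with hw'
      have hhwh : h * w' * h = h := by
        have e : h * w' * h = h * k' * h * (k' * h) := by rw [hw']; noncomm_ring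
        rw [hhkh] at e
        rw [e, ← mul_assoc]; exact hhkh
      have hwhw : w' * h * w' = w' := by
        have e : w' * h * w' = k' * (h * k' * h) * (k' * h * k') := by rw [hw']; noncomm_ring
        rw [hhkh] at e
        have e2 : k' * h * (k' * h * k') = k' * (h * k' * h) * k' := by noncomm_ring
        rw [e, e2, hhkh, ← hw']
      exact ⟨constantCoeff w, constantCoeff w',
        ⟨by simpa [map_mul] using congrArg (constantCoeff) hgwg,
         by simpa [map_mul] using congrArg (constantCoeff) hwgw⟩,
        ⟨by simpa [map_mul] using congrArg (constantCoeff) hhwh,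
         by simpa [map_mul] using congrArg (constantCoeff) hwhw⟩,
        regKey g w hgwg, regKey h w' hhwh⟩
  · rintro ⟨⟨y₀, hy₀c, hy₀b, ⟨s₀, hs₀⟩, ⟨t₀, ht₀⟩⟩, bp, cp, ⟨hb1, hb2⟩, ⟨hc1, hc2⟩, hΔg, hΔh⟩
    obtain ⟨m, u, hccm, hccu, hgmu⟩ := factor g bp hΔg
    obtain ⟨n, v, hccn, hccv, hhnv⟩ := factor h cp hΔh
    set a₀ := constantCoeff f with ha₀
    set b₀ := constantCoeff g with hb₀
    set c₀ := constantCoeff h with hc₀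
    set G := v * f * m with hG
    set G₁ := G - C a₀ with hG₁
    have hGsplit : G = C a₀ + G₁ := by rw [hG₁]; abel
    have hccG₁ : constantCoeff G₁ = 0 := by
      rw [hG₁, map_sub, hG, map_mul, map_mul, hccv, hccm, constantCoeff_C,
        one_mul, mul_one, ← ha₀, sub_self]
    set P := 1 + G₁ * C y₀ with hP_def
    set Q := 1 + C y₀ * G₁ with hQ_def
    have hccP : constantCoeff P = 1 := by
      rw [hP_def, map_add, map_one, map_mul, hccG₁, zero_mul, add_zero]
    have hccQ : constantCoeff Q = 1 := by
      rw [hQ_def, map_add, map_one, map_mul, hccG₁, mul_zero, add_zero]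
    set s : PowerSeries R := Ring.inverse u * C s₀ * Ring.inverse P * v with hs_def
    set t : PowerSeries R := m * Ring.inverse Q * C t₀ * Ring.inverse n with ht_def
    have key1 : C c₀ * (G * C y₀) = C c₀ * P := by
      have e : C c₀ * (G * C y₀) - C c₀ * P
          = C c₀ * C a₀ * C y₀ - C c₀ := by
        rw [hGsplit, hP_def]; noncomm_ring
      rw [← map_mul, ← map_mul, hy₀c, sub_self] at e
      exact sub_eq_zero.mp e
    have key2 : C y₀ * G * C b₀ = Q * C b₀ := by
      have e : C y₀ * G * C b₀ - Q * C b₀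
          = C y₀ * C a₀ * C b₀ - C b₀ := by
        rw [hGsplit, hQ_def]; noncomm_ring
      rw [← map_mul, ← map_mul, hy₀b, sub_self] at e
      exact sub_eq_zero.mp e
    have hS : h * f * g * s = h := by
      calc h * f * g * s
          = n * C c₀ * (G * C b₀) * (u * Ring.inverse u)
              * (C s₀ * Ring.inverse P * v) := by
            rw [hs_def, hgmu, hhnv, hG]; noncomm_ring
        _ = n * C c₀ * (G * C b₀) * (C s₀ * Ring.inverse P * v) := by
            rw [mul_inv_cc_one hccu, mul_one]
        _ = n * (C c₀ * (G * (C b₀ * C s₀))) * (Ring.inverse P * v) := by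
            noncomm_ring
        _ = n * (C c₀ * (G * C y₀)) * (Ring.inverse P * v) := by
            rw [← map_mul, ← hs₀]
        _ = n * (C c₀ * P) * (Ring.inverse P * v) := by rw [key1]
        _ = n * C c₀ * (P * Ring.inverse P) * v := by noncomm_ring
        _ = n * C c₀ * v := by rw [mul_inv_cc_one hccP, mul_one]
        _ = h := hhnv.symm
    have hT : t * (h * f * g) = g := by
      calc t * (h * f * g)
          = m * Ring.inverse Q * C t₀ * (Ring.inverse n * n)
              * (C c₀ * (G * (C b₀ * u))) := by
            rw [ht_def, hgmu, hhnv, hG]; noncomm_ring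
        _ = m * Ring.inverse Q * C t₀ * (C c₀ * (G * (C b₀ * u))) := by
            rw [inv_mul_cc_one hccn, mul_one]
        _ = m * Ring.inverse Q * (C t₀ * C c₀ * G * C b₀) * u := by
            noncomm_ring
        _ = m * Ring.inverse Q * (C y₀ * G * C b₀) * u := by
            rw [← map_mul, ← ht₀]
        _ = m * Ring.inverse Q * (Q * C b₀) * u := by rw [key2]
        _ = m * (Ring.inverse Q * Q) * (C b₀ * u) := by noncomm_ring
        _ = m * (C b₀ * u) := by rw [inv_mul_cc_one hccQ, mul_one]
        _ = m * C b₀ * u := by rw [mul_assoc]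
        _ = g := hgmu.symm
    have hyg : t * (h * f * g) * s = g * s := by rw [hT]
    have hyh : t * (h * f * g) * s = t * h := by rw [mul_assoc, hS]
    refine ⟨t * (h * f * g) * s, ?_, ?_, ⟨s, hyg⟩, ⟨t, hyh⟩⟩
    · rw [hyg, ← mul_assoc]; exact hS
    · rw [hyh]
      have e : t * h * f * g = t * (h * f * g) := by noncomm_ring
      rw [e]; exact hT
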